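/- Let d, w₁, w₂, w₃ be odd positive integers, χ : ℤ → ℂ be d-periodic, and ξ ∈ ℂ with the relevant ξ^{d w_i w_j} + 1 ≠ 0. Then for all n ≥ 0 and y₁,y₂ ∈ ℂ: ∑_{k+l+m=n} (n!/(k!l!m!)) E_{k,χ,ξ^{w₂w₃}}(w₁y₁) E_{l,χ,ξ^{w₁w₃}}(w₂y₂) T_m(w₃d−1; χ, ξ^{w₁w₂}) w₁^{l+m} w₂^{k+m} w₃^{k+l} equals the analogous expression for every one of the six permutations of (w₁, w₂, w₃). -/

import Mathlib

open Finset PowerSeries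

/-- Generating function of the generalized twisted Euler polynomials:
`2 e^{xt} (ξ^d e^{dt}+1)⁻¹ ∑_{a=0}^{d-1} (-1)^a χ(a) ξ^a e^{at}` in `ℂ[[t]]`. -/
noncomputable def Egf (d : ℕ) (χ : ℤ → ℂ) (ξ x : ℂ) : PowerSeries ℂ :=
  2 * rescale x (exp ℂ) * (ξ ^ d • rescale (d : ℂ) (exp ℂ) + 1)⁻¹ *
    ∑ a ∈ Finset.range d, ((-1 : ℂ) ^ a * χ a * ξ ^ a) • rescale (a : ℂ) (exp ℂ)

/-- The generalized twisted Euler polynomial `E_{n,χ,ξ}(x)`. -/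
noncomputable def E (d : ℕ) (χ : ℤ → ℂ) (ξ x : ℂ) (n : ℕ) : ℂ :=
  (n.factorial : ℂ) * PowerSeries.coeff n (Egf d χ ξ x)

/-- The alternating generalized twisted power sum `T_k(m; χ, ξ)`. -/
noncomputable def T (m : ℕ) (χ : ℤ → ℂ) (ξ : ℂ) (k : ℕ) : ℂ :=
  ∑ a ∈ Finset.range (m + 1), (-1 : ℂ) ^ a * χ a * ξ ^ a * (a : ℂ) ^ k


/-- The triple sum of Theorem 2, as a function of `(w₁, w₂, w₃)`. -/
noncomputable def S (d : ℕ) (χ : ℤ → ℂ) (ξ : ℂ) (n : ℕ) (y₁ y₂ : ℂ)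
    (u v w : ℕ) : ℂ :=
  ∑ k ∈ Finset.range (n + 1), ∑ l ∈ Finset.range (n + 1 - k),
    (n.factorial : ℂ) / ((k.factorial : ℂ) * (l.factorial : ℂ) * ((n - k - l).factorial : ℂ)) *
      E d χ (ξ ^ (v * w)) ((u : ℂ) * y₁) k *
      E d χ (ξ ^ (u * w)) ((v : ℂ) * y₂) l *
      T (w * d - 1) χ (ξ ^ (u * v)) (n - k - l) *
      (u : ℂ) ^ (l + (n - k - l)) * (v : ℂ) ^ (k + (n - k - l)) * (w : ℂ) ^ (k + l)

private lemma myrescale_smul (c r : ℂ) (P : PowerSeries ℂ) :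
    rescale c (r • P) = r • rescale c P := by
  ext n
  simp only [coeff_rescale, coeff_smul, smul_eq_mul]
  ring

private lemma myconstantCoeff_rescale (c : ℂ) (P : PowerSeries ℂ) :
    constantCoeff (rescale c P) = constantCoeff P := by
  rw [← coeff_zero_eq_constantCoeff_apply, coeff_rescale]
  simp

private lemma myconstantCoeff_smul (r : ℂ) (P : PowerSeries ℂ) :
    constantCoeff (r • P) = r * constantCoeff P := by
  rw [← coeff_zero_eq_constantCoeff_apply, coeff_smul, smul_eq_mul,
    coeff_zero_eq_constantCoeff_apply]

private lemma myrexp_pow (a : ℂ) (c : ℕ) :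
    (rescale a (exp ℂ)) ^ c = rescale ((c : ℂ) * a) (exp ℂ) := by
  induction c with
  | zero => simp [rescale_zero]
  | succ c ih =>
      rw [pow_succ, ih, exp_mul_exp_eq_exp_add]
      congr 1
      push_cast
      ring

private lemma myrescale_inv (c : ℂ) (P : PowerSeries ℂ) (h : constantCoeff P ≠ 0) :
    rescale c P⁻¹ = (rescale c P)⁻¹ := by
  have h2 : constantCoeff (rescale c P) ≠ 0 := by
    rw [myconstantCoeff_rescale]; exact h
  rw [PowerSeries.eq_inv_iff_mul_eq_one h2, ← map_mul, PowerSeries.inv_mul_cancel P h, map_one]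

/-- `ξ^{dm} e^{dmt} + 1`. -/
noncomputable def eA (d : ℕ) (ξ : ℂ) (m : ℕ) : PowerSeries ℂ :=
  ξ ^ (d * m) • rescale ((d * m : ℕ) : ℂ) (exp ℂ) + 1

/-- `∑_{b<d} (-1)^b χ(b) ξ^{mb} e^{mbt}`. -/
noncomputable def eF (d : ℕ) (χ : ℤ → ℂ) (ξ : ℂ) (m : ℕ) : PowerSeries ℂ :=
  ∑ b ∈ Finset.range d, ((-1 : ℂ) ^ b * χ b * ξ ^ (m * b)) • rescale ((m * b : ℕ) : ℂ) (exp ℂ)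

/-- generating function of the twisted power sums. -/
noncomputable def Tgf (d : ℕ) (χ : ℤ → ℂ) (ξ : ℂ) (m q : ℕ) : PowerSeries ℂ :=
  ∑ a ∈ Finset.range (q * d), ((-1 : ℂ) ^ a * χ a * ξ ^ (m * a)) • rescale ((m * a : ℕ) : ℂ) (exp ℂ)

private lemma myconstantCoeff_eA (d : ℕ) (ξ : ℂ) (m : ℕ) :
    constantCoeff (eA d ξ m) = ξ ^ (d * m) + 1 := by
  simp [eA, myconstantCoeff_smul, myconstantCoeff_rescale]

private lemma myrescale_Egf (d : ℕ) (χ : ℤ → ℂ) (ξ x : ℂ) (m : ℕ)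
    (hne : ξ ^ (d * m) + 1 ≠ 0) :
    rescale ((m : ℕ) : ℂ) (Egf d χ (ξ ^ m) x) =
      2 * rescale (((m : ℕ) : ℂ) * x) (exp ℂ) * (eA d ξ m)⁻¹ * eF d χ ξ m := by
  have hc : constantCoeff ((ξ ^ m) ^ d • rescale (d : ℂ) (exp ℂ) + 1) ≠ 0 := by
    rw [map_add, map_one, myconstantCoeff_smul, myconstantCoeff_rescale, constantCoeff_exp,
      mul_one, ← pow_mul, mul_comm m d]
    exact hne
  unfold Egf
  rw [map_mul, map_mul, map_mul, myrescale_inv _ _ hc, map_sum]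
  have h2 : rescale ((m : ℕ) : ℂ) (2 : PowerSeries ℂ) = 2 := map_ofNat _ 2
  have hx : rescale ((m : ℕ) : ℂ) (rescale x (exp ℂ)) = rescale (((m : ℕ) : ℂ) * x) (exp ℂ) := by
    rw [rescale_rescale, mul_comm]
  have hA : rescale ((m : ℕ) : ℂ) ((ξ ^ m) ^ d • rescale (d : ℂ) (exp ℂ) + 1) = eA d ξ m := by
    rw [map_add, map_one, myrescale_smul, rescale_rescale, ← pow_mul, mul_comm m d, eA]
    congr 2
    push_cast
    ring
  have hS : (∑ a ∈ Finset.range d,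
      rescale ((m : ℕ) : ℂ) (((-1 : ℂ) ^ a * χ a * (ξ ^ m) ^ a) • rescale (a : ℂ) (exp ℂ))) =
      eF d χ ξ m := by
    unfold eF
    refine Finset.sum_congr rfl fun a _ => ?_
    rw [myrescale_smul, rescale_rescale, ← pow_mul]
    congr 2
    push_cast
    ring
  rw [h2, hx, hA, hS]

private lemma mychi_period (d : ℕ) (χ : ℤ → ℂ) (hχ : Function.Periodic χ (d : ℤ)) (q j : ℕ) :
    χ ((q * d + j : ℕ) : ℤ) = χ j := by
  have h := (hχ.nat_mul q) (j : ℤ)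
  push_cast
  rw [add_comm]
  exact h

private lemma mysmul_rexp_pow (r s : ℂ) (q : ℕ) :
    (-(r • rescale s (exp ℂ))) ^ q = ((-r) ^ q) • rescale ((q : ℂ) * s) (exp ℂ) := by
  rw [← neg_smul, smul_pow, myrexp_pow]

private lemma myTgf_eq_mul (d : ℕ) (hd : Odd d) (χ : ℤ → ℂ)
    (hχ : Function.Periodic χ (d : ℤ)) (ξ : ℂ) (m q : ℕ) :
    Tgf d χ ξ m q =
      eF d χ ξ m *
        ∑ c ∈ Finset.range q, (-(ξ ^ (d * m) • rescale ((d * m : ℕ) : ℂ) (exp ℂ))) ^ c := by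
  induction q with
  | zero => simp [Tgf]
  | succ q ih =>
      have hr : (q + 1) * d = q * d + d := by ring
      rw [Tgf, hr, Finset.sum_range_add, ← Tgf, ih, Finset.sum_range_succ, mul_add]
      congr 1
      rw [eF, Finset.sum_mul, mysmul_rexp_pow]
      refine Finset.sum_congr rfl fun j hj => ?_
      rw [smul_mul_smul_comm, exp_mul_exp_eq_exp_add]
      have harg : ((m * (q * d + j) : ℕ) : ℂ)
          = ((m * j : ℕ) : ℂ) + (q : ℂ) * ((d * m : ℕ) : ℂ) := by
        push_cast; ring
      have hscal : (-1 : ℂ) ^ (q * d + j) * χ ((q * d + j : ℕ) : ℤ) * ξ ^ (m * (q * d + j))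
          = (-1 : ℂ) ^ j * χ (j : ℤ) * ξ ^ (m * j) * (-ξ ^ (d * m)) ^ q := by
        rw [mychi_period d χ hχ q j, neg_pow (ξ ^ (d * m)) q, ← pow_mul ξ (d * m) q,
          show m * (q * d + j) = m * j + d * m * q from by ring, pow_add (ξ) (m*j),
          pow_add (-1 : ℂ) (q*d) j, show q * d = d * q from by ring, pow_mul (-1 : ℂ) d q,
          hd.neg_one_pow]
        ring
      rw [harg, hscal]

private lemma mygeom_odd {R : Type*} [CommRing R] (X : R) (q : ℕ) (hq : Odd q) :
    (X + 1) * ∑ c ∈ Finset.range q, (-X) ^ c = X ^ q + 1 := by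
  have h := geom_sum_mul (-X) q
  rw [hq.neg_pow] at h
  linear_combination -h

private lemma myeA_mul_Tgf (d : ℕ) (hd : Odd d) (χ : ℤ → ℂ)
    (hχ : Function.Periodic χ (d : ℤ)) (ξ : ℂ) (m q : ℕ) (hq : Odd q) :
    eA d ξ m * Tgf d χ ξ m q = eF d χ ξ m * eA d ξ (m * q) := by
  rw [myTgf_eq_mul d hd χ hχ ξ m q]
  have hXq : (ξ ^ (d * m) • rescale ((d * m : ℕ) : ℂ) (exp ℂ)) ^ q
      = ξ ^ (d * (m * q)) • rescale ((d * (m * q) : ℕ) : ℂ) (exp ℂ) := by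
    rw [smul_pow, myrexp_pow, ← pow_mul]
    congr 2
    · ring
    · push_cast; ring
  calc eA d ξ m * (eF d χ ξ m *
          ∑ c ∈ Finset.range q, (-(ξ ^ (d * m) • rescale ((d * m : ℕ) : ℂ) (exp ℂ))) ^ c)
      = eF d χ ξ m * ((ξ ^ (d * m) • rescale ((d * m : ℕ) : ℂ) (exp ℂ) + 1) *
          ∑ c ∈ Finset.range q, (-(ξ ^ (d * m) • rescale ((d * m : ℕ) : ℂ) (exp ℂ))) ^ c) := by
        rw [eA]; ring
    _ = eF d χ ξ m * eA d ξ (m * q) := by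
        rw [mygeom_odd _ q hq, hXq, eA]

private lemma myTgf_inv (d : ℕ) (hd : Odd d) (χ : ℤ → ℂ)
    (hχ : Function.Periodic χ (d : ℤ)) (ξ : ℂ) (m q : ℕ) (hq : Odd q)
    (hne : ξ ^ (d * m) + 1 ≠ 0) :
    Tgf d χ ξ m q = (eA d ξ m)⁻¹ * (eF d χ ξ m * eA d ξ (m * q)) := by
  have h0 : constantCoeff (eA d ξ m) ≠ 0 := by
    rw [myconstantCoeff_eA]; exact hne
  rw [← myeA_mul_Tgf d hd χ hχ ξ m q hq, ← mul_assoc,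
    PowerSeries.inv_mul_cancel _ h0, one_mul]

private lemma mysum_reindex {M : Type*} [AddCommMonoid M] (f : ℕ → ℕ → M) (n : ℕ) :
    ∑ i ∈ Finset.range (n + 1), ∑ k ∈ Finset.range (i + 1), f k (i - k) =
      ∑ k ∈ Finset.range (n + 1), ∑ l ∈ Finset.range (n + 1 - k), f k l := by
  induction n with
  | zero => simp
  | succ n ih =>
      rw [Finset.sum_range_succ, ih, Finset.sum_range_succ (fun k =>
        ∑ l ∈ Finset.range (n + 1 + 1 - k), f k l)]
      have h1 : ∀ k ∈ Finset.range (n + 1),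
          ∑ l ∈ Finset.range (n + 1 + 1 - k), f k l
            = ∑ l ∈ Finset.range (n + 1 - k), f k l + f k (n + 1 - k) := by
        intro k hk
        rw [Finset.mem_range] at hk
        rw [show n + 1 + 1 - k = (n + 1 - k) + 1 from by omega, Finset.sum_range_succ]
      rw [Finset.sum_congr rfl h1, Finset.sum_add_distrib]
      have h2 : ∑ k ∈ Finset.range (n + 1 + 1), f k (n + 1 - k)
          = ∑ k ∈ Finset.range (n + 1), f k (n + 1 - k) + f (n + 1) (n + 1 - (n + 1)) :=
        Finset.sum_range_succ _ _
      rw [h2]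
      simp only [Nat.sub_self, Nat.add_sub_cancel_left]
      abel_nf
      simp [add_assoc, add_comm]

private lemma mycoeff_Tgf (d : ℕ) (χ : ℤ → ℂ) (ξ : ℂ) (m q M : ℕ) (hpos : 0 < q * d) :
    PowerSeries.coeff M (Tgf d χ ξ m q)
      = ((m : ℕ) : ℂ) ^ M / (M.factorial : ℂ) * T (q * d - 1) χ (ξ ^ m) M := by
  unfold Tgf T
  rw [Nat.sub_add_cancel hpos, map_sum, Finset.mul_sum]
  refine Finset.sum_congr rfl fun a _ => ?_
  rw [coeff_smul, smul_eq_mul, coeff_rescale, coeff_exp, eq_ratCast]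
  have hfac : ((M.factorial : ℂ)) ≠ 0 := Nat.cast_ne_zero.mpr M.factorial_ne_zero
  push_cast
  rw [← pow_mul]
  field_simp
  ring

/-- The manifestly symmetric generating function. -/
noncomputable def Hsym (d : ℕ) (χ : ℤ → ℂ) (ξ : ℂ) (y₁ y₂ : ℂ) (a b c : ℕ) :
    PowerSeries ℂ :=
  4 * rescale (((a * b * c : ℕ) : ℂ) * (y₁ + y₂)) (exp ℂ) * eA d ξ (a * b * c) *
    ((eA d ξ (b * c))⁻¹ * (eA d ξ (a * c))⁻¹ * (eA d ξ (a * b))⁻¹) *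
    (eF d χ ξ (b * c) * eF d χ ξ (a * c) * eF d χ ξ (a * b))

private lemma myHsym_swap01 (d : ℕ) (χ : ℤ → ℂ) (ξ y₁ y₂ : ℂ) (a b c : ℕ) :
    Hsym d χ ξ y₁ y₂ b a c = Hsym d χ ξ y₁ y₂ a b c := by
  unfold Hsym
  rw [show b * a * c = a * b * c from by ring, show b * a = a * b from by ring]
  ring

private lemma myHsym_swap12 (d : ℕ) (χ : ℤ → ℂ) (ξ y₁ y₂ : ℂ) (a b c : ℕ) :
    Hsym d χ ξ y₁ y₂ a c b = Hsym d χ ξ y₁ y₂ a b c := by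
  unfold Hsym
  rw [show a * c * b = a * b * c from by ring, show c * b = b * c from by ring]
  ring

private lemma myS_eq (d : ℕ) (hd : Odd d) (hd0 : 0 < d) (χ : ℤ → ℂ)
    (hχ : Function.Periodic χ (d : ℤ)) (ξ : ℂ) (n : ℕ) (y₁ y₂ : ℂ)
    (a b c : ℕ) (hc0 : 0 < c) (hcodd : Odd c)
    (hab : ξ ^ (d * (a * b)) + 1 ≠ 0) (hac : ξ ^ (d * (a * c)) + 1 ≠ 0)
    (hbc : ξ ^ (d * (b * c)) + 1 ≠ 0) :
    S d χ ξ n y₁ y₂ a b c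
      = (n.factorial : ℂ) * PowerSeries.coeff n (Hsym d χ ξ y₁ y₂ a b c) := by
  set P₁ := rescale (((b * c : ℕ) : ℂ)) (Egf d χ (ξ ^ (b * c)) ((a : ℂ) * y₁)) with hP₁
  set P₂ := rescale (((a * c : ℕ) : ℂ)) (Egf d χ (ξ ^ (a * c)) ((b : ℂ) * y₂)) with hP₂
  set P₃ := Tgf d χ ξ (a * b) c with hP₃
  have hGH : P₁ * P₂ * P₃ = Hsym d χ ξ y₁ y₂ a b c := by
    rw [hP₁, hP₂, hP₃, myrescale_Egf d χ ξ ((a : ℂ) * y₁) (b * c) hbc,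
      myrescale_Egf d χ ξ ((b : ℂ) * y₂) (a * c) hac,
      myTgf_inv d hd χ hχ ξ (a * b) c hcodd hab]
    have hmerge : rescale (((b * c : ℕ) : ℂ) * ((a : ℂ) * y₁)) (exp ℂ) *
        rescale (((a * c : ℕ) : ℂ) * ((b : ℂ) * y₂)) (exp ℂ)
        = rescale (((a * b * c : ℕ) : ℂ) * (y₁ + y₂)) (exp ℂ) := by
      rw [exp_mul_exp_eq_exp_add]
      congr 1
      push_cast
      ring
    unfold Hsym
    rw [← hmerge, show a * b * c = (a * b) * c from by ring]
    ring
  rw [← hGH]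
  -- expand the coefficient of the triple product
  rw [coeff_mul, Finset.Nat.sum_antidiagonal_eq_sum_range_succ_mk]
  have hinner : ∀ i ∈ Finset.range (n + 1),
      (PowerSeries.coeff (i, n - i).1 (P₁ * P₂)) * PowerSeries.coeff (i, n - i).2 P₃
        = ∑ k ∈ Finset.range (i + 1),
            PowerSeries.coeff k P₁ * PowerSeries.coeff (i - k) P₂ *
              PowerSeries.coeff (n - k - (i - k)) P₃ := by
    intro i hi
    rw [Finset.mem_range] at hi
    rw [coeff_mul, Finset.Nat.sum_antidiagonal_eq_sum_range_succ_mk, Finset.sum_mul]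
    refine Finset.sum_congr rfl fun k hk => ?_
    rw [Finset.mem_range] at hk
    have hidx : n - k - (i - k) = n - i := by omega
    rw [hidx]
  rw [Finset.sum_congr rfl hinner,
    mysum_reindex (fun k l => PowerSeries.coeff k P₁ * PowerSeries.coeff l P₂ *
      PowerSeries.coeff (n - k - l) P₃) n]
  unfold S
  rw [Finset.mul_sum]
  refine Finset.sum_congr rfl fun k hk => ?_
  rw [Finset.mul_sum]
  refine Finset.sum_congr rfl fun l hl => ?_
  rw [Finset.mem_range] at hk hl
  have hk0 : ((k.factorial : ℂ)) ≠ 0 := Nat.cast_ne_zero.mpr k.factorial_ne_zero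
  have hl0 : ((l.factorial : ℂ)) ≠ 0 := Nat.cast_ne_zero.mpr l.factorial_ne_zero
  have hm0 : (((n - k - l).factorial : ℂ)) ≠ 0 :=
    Nat.cast_ne_zero.mpr (n - k - l).factorial_ne_zero
  have hE1 : PowerSeries.coeff k (Egf d χ (ξ ^ (b * c)) ((a : ℂ) * y₁))
      = E d χ (ξ ^ (b * c)) ((a : ℂ) * y₁) k / (k.factorial : ℂ) := by
    rw [E, mul_div_cancel_left₀ _ hk0]
  have hE2 : PowerSeries.coeff l (Egf d χ (ξ ^ (a * c)) ((b : ℂ) * y₂))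
      = E d χ (ξ ^ (a * c)) ((b : ℂ) * y₂) l / (l.factorial : ℂ) := by
    rw [E, mul_div_cancel_left₀ _ hl0]
  rw [hP₁, hP₂, hP₃, coeff_rescale, coeff_rescale, hE1, hE2,
    mycoeff_Tgf d χ ξ (a * b) c (n - k - l) (Nat.mul_pos hc0 hd0)]
  push_cast
  field_simp
  ring

/-- Theorem 2: the expression is invariant under all six permutations of `(w₁,w₂,w₃)`. -/
theorem theorem2 (d : ℕ) (hd : Odd d) (hd0 : 0 < d)
    (χ : ℤ → ℂ) (hχ : Function.Periodic χ (d : ℤ)) (ξ : ℂ)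
    (w : Fin 3 → ℕ) (hw : ∀ i, 0 < w i) (hwodd : ∀ i, Odd (w i))
    (hξ : ∀ i j, i ≠ j → ξ ^ (d * w i * w j) + 1 ≠ 0)
    (n : ℕ) (y₁ y₂ : ℂ) (σ : Equiv.Perm (Fin 3)) :
    S d χ ξ n y₁ y₂ (w (σ 0)) (w (σ 1)) (w (σ 2)) =
      S d χ ξ n y₁ y₂ (w 0) (w 1) (w 2) := by
  have key : ∀ i j k : Fin 3, i ≠ j → i ≠ k → j ≠ k →
      S d χ ξ n y₁ y₂ (w i) (w j) (w k)
        = (n.factorial : ℂ) * PowerSeries.coeff n (Hsym d χ ξ y₁ y₂ (w i) (w j) (w k)) := by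
    intro i j k hij hik hjk
    refine myS_eq d hd hd0 χ hχ ξ n y₁ y₂ (w i) (w j) (w k) (hw k) (hwodd k) ?_ ?_ ?_
    · rw [← mul_assoc]; exact hξ i j hij
    · rw [← mul_assoc]; exact hξ i k hik
    · rw [← mul_assoc]; exact hξ j k hjk
  have h01 : σ 0 ≠ σ 1 := fun h => absurd (σ.injective h) (by decide)
  have h02 : σ 0 ≠ σ 2 := fun h => absurd (σ.injective h) (by decide)
  have h12 : σ 1 ≠ σ 2 := fun h => absurd (σ.injective h) (by decide)
  rw [key (σ 0) (σ 1) (σ 2) h01 h02 h12, key 0 1 2 (by decide) (by decide) (by decide)]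
  have hH : Hsym d χ ξ y₁ y₂ (w (σ 0)) (w (σ 1)) (w (σ 2))
      = Hsym d χ ξ y₁ y₂ (w 0) (w 1) (w 2) := by
    have h3 : ∀ i : Fin 3, i = 0 ∨ i = 1 ∨ i = 2 := by decide
    rcases h3 (σ 0) with h0 | h0 | h0 <;> rcases h3 (σ 1) with h1 | h1 | h1 <;>
      rcases h3 (σ 2) with h2 | h2 | h2 <;>
      first
        | exact absurd (h0.trans h1.symm) h01
        | exact absurd (h0.trans h2.symm) h02
        | exact absurd (h1.trans h2.symm) h12
        | (rw [h0, h1, h2]; done)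
        | (rw [h0, h1, h2]; (conv_lhs => rw [myHsym_swap01]); done)
        | (rw [h0, h1, h2]; (conv_lhs => rw [myHsym_swap12]); done)
        | (rw [h0, h1, h2]; (conv_lhs => rw [myHsym_swap12, myHsym_swap01]); done)
        | (rw [h0, h1, h2]; (conv_lhs => rw [myHsym_swap01, myHsym_swap12]); done)
        | (rw [h0, h1, h2]; (conv_lhs => rw [myHsym_swap01, myHsym_swap12, myHsym_swap01]); done)
  rw [hH]
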